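/- Let φ^0, φ^1, …, φ^N be a sequence in a real inner product space H. Then for every 1 ≤ n ≤ N, ⟨Δ_τ^{ν(t_n)} φ^n, φ^n⟩ ≥ (1/(2τ)) ∑_{k=1}^{n} b^{(ν)}_{n,k} (‖φ^k‖² − ‖φ^{k−1}‖²), i.e. the discrete variable-order Caputo operator satisfies ⟨Δ_τ^{ν(t_n)} φ^n, φ^n⟩ ≥ (1/2) Δ_τ^{ν(t_n)} ‖φ^n‖², where Δ_τ^{ν(t_n)} ‖φ^n‖² denotes (1/τ) ∑_{k=1}^{n} b^{(ν)}_{n,k} (‖φ^k‖² − ‖φ^{k−1}‖²). -/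

import Mathlib

open Finset
open scoped RealInnerProductSpace

/-- Abel-summation style lower bound: if `a` is nonnegative and nondecreasing on `[1,n]`
and `g` is nonnegative, then `∑_{k=1}^n a k (g(k-1) - g k) ≥ - a n * g n`. -/
lemma abel_sum_ge (a g : ℕ → ℝ) :
    ∀ n, 1 ≤ n →
      (∀ k, 1 ≤ k → k ≤ n → 0 ≤ a k) →
      (∀ k, 1 ≤ k → k + 1 ≤ n → a k ≤ a (k + 1)) →
      (∀ k, 0 ≤ g k) →
      -(a n * g n) ≤ ∑ k ∈ Finset.Icc 1 n, a k * (g (k - 1) - g k) := by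
  intro n
  induction n with
  | zero => intro h; omega
  | succ m ih =>
    intro _ hpos hmono hg
    rcases Nat.eq_or_lt_of_le (Nat.one_le_iff_ne_zero.mpr (Nat.succ_ne_zero m)) with h1 | h1
    · -- m + 1 = 1
      have hm : m = 0 := by omega
      subst hm
      simp only [Finset.Icc_self, Finset.sum_singleton]
      have h0 : 0 ≤ a 1 := hpos 1 le_rfl le_rfl
      have h2 : 0 ≤ g 0 := hg 0
      nlinarith
    · have hm1 : 1 ≤ m := by omega
      have hstep : ∑ k ∈ Finset.Icc 1 (m + 1), a k * (g (k - 1) - g k)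
          = (∑ k ∈ Finset.Icc 1 m, a k * (g (k - 1) - g k))
            + a (m + 1) * (g (m + 1 - 1) - g (m + 1)) :=
        Finset.sum_Icc_succ_top (by omega) _
      have ihm : -(a m * g m) ≤ ∑ k ∈ Finset.Icc 1 m, a k * (g (k - 1) - g k) :=
        ih hm1 (fun k hk1 hk2 => hpos k hk1 (by omega))
          (fun k hk1 hk2 => hmono k hk1 (by omega)) hg
      have hmon : a m ≤ a (m + 1) := hmono m hm1 le_rfl
      have hgm : 0 ≤ g m := hg m
      have hsimp : m + 1 - 1 = m := rfl
      rw [hstep, hsimp]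
      nlinarith

/-- For every 1 ≤ n ≤ N the discrete variable-order Caputo operator
satisfies `⟨Δ_τ^{ν(t_n)} φ^n, φ^n⟩ ≥ (1/(2τ)) ∑_{k=1}^{n} b_{n,k} (‖φ^k‖² - ‖φ^{k-1}‖²)`,
i.e. `⟨Δ_τ^{ν(t_n)} φ^n, φ^n⟩ ≥ (1/2) Δ_τ^{ν(t_n)} ‖φ^n‖²`. -/
theorem discrete_caputo_norm_sq_inequality
    {H : Type*} [NormedAddCommGroup H] [InnerProductSpace ℝ H]
    (T : ℝ) (hT : 0 < T) (N : ℕ) (hN : 0 < N)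
    (τ : ℝ) (hτ : τ = T / N)
    (t : ℕ → ℝ) (ht : ∀ k, t k = k * τ)
    (ν : ℝ → ℝ) (hν : ∀ s ∈ Set.Icc (0 : ℝ) T, 0 < ν s ∧ ν s < 1)
    (b : ℕ → ℕ → ℝ)
    (hb : ∀ n k, 1 ≤ k → k ≤ n → n ≤ N →
      b n k = (1 / Real.Gamma (2 - ν (t n))) *
        ((t n - t (k - 1)) ^ (1 - ν (t n)) - (t n - t k) ^ (1 - ν (t n))))
    (φ : ℕ → H)
    (n : ℕ) (hn1 : 1 ≤ n) (hnN : n ≤ N) :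
    ⟪(1 / τ) • ∑ k ∈ Finset.Icc 1 n, b n k • (φ k - φ (k - 1)), φ n⟫ ≥
      (1 / (2 * τ)) * ∑ k ∈ Finset.Icc 1 n, b n k * (‖φ k‖ ^ 2 - ‖φ (k - 1)‖ ^ 2) := by
  have hτ0 : 0 < τ := by
    rw [hτ]; positivity
  -- t n ∈ [0, T]
  have htn : t n ∈ Set.Icc (0 : ℝ) T := by
    rw [ht]
    constructor
    · positivity
    · rw [hτ]
      have hnN' : (n : ℝ) ≤ (N : ℝ) := by exact_mod_cast hnN
      have hN0 : (0 : ℝ) < N := by exact_mod_cast hN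
      rw [div_eq_mul_inv, ← mul_assoc]
      calc (n : ℝ) * T * (N : ℝ)⁻¹ ≤ (N : ℝ) * T * (N : ℝ)⁻¹ := by
            apply mul_le_mul_of_nonneg_right (by nlinarith) (by positivity)
        _ = T := by field_simp
  obtain ⟨hν0, hν1⟩ := hν (t n) htn
  set p : ℝ := 1 - ν (t n) with hp
  have hp0 : 0 < p := by simp only [hp]; linarith
  have hp1 : p < 1 := by simp only [hp]; linarith
  set C : ℝ := 1 / Real.Gamma (2 - ν (t n)) with hC
  have hC0 : 0 < C := by
    have := Real.Gamma_pos_of_pos (show (0 : ℝ) < 2 - ν (t n) by linarith)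
    positivity
  -- rewrite b n k
  have htt : ∀ j, j ≤ n → t n - t j = ((n - j : ℕ) : ℝ) * τ := by
    intro j hj
    rw [ht, ht, Nat.cast_sub hj]
    ring
  have hbk : ∀ k, 1 ≤ k → k ≤ n →
      b n k = C * ((((n - k + 1 : ℕ) : ℝ) * τ) ^ p - (((n - k : ℕ) : ℝ) * τ) ^ p) := by
    intro k hk1 hk2
    rw [hb n k hk1 hk2 hnN, htt k hk2, htt (k - 1) (by omega)]
    have : n - (k - 1) = n - k + 1 := by omega
    rw [this]
  -- f j := (j τ)^p is nondecreasing with decreasing increments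
  have hf_mono : ∀ i j : ℕ, i ≤ j → (((i : ℕ) : ℝ) * τ) ^ p ≤ (((j : ℕ) : ℝ) * τ) ^ p := by
    intro i j hij
    apply Real.rpow_le_rpow (by positivity) _ hp0.le
    have : (i : ℝ) ≤ (j : ℝ) := by exact_mod_cast hij
    nlinarith
  have hf_conc : ∀ j : ℕ,
      (((j + 2 : ℕ) : ℝ) * τ) ^ p - (((j + 1 : ℕ) : ℝ) * τ) ^ p ≤
        (((j + 1 : ℕ) : ℝ) * τ) ^ p - (((j : ℕ) : ℝ) * τ) ^ p := by
    intro j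
    have hcon := Real.concaveOn_rpow hp0.le hp1.le
    have h1 : ((j : ℝ) * τ) ∈ Set.Ici (0 : ℝ) := by
      simp only [Set.mem_Ici]; positivity
    have h2 : (((j : ℝ) + 2) * τ) ∈ Set.Ici (0 : ℝ) := by
      simp only [Set.mem_Ici]; positivity
    have hkey := hcon.2 h1 h2 (by norm_num : (0:ℝ) ≤ 1/2) (by norm_num : (0:ℝ) ≤ 1/2)
      (by norm_num : (1:ℝ)/2 + 1/2 = 1)
    simp only [smul_eq_mul] at hkey
    have hmid : (1:ℝ)/2 * ((j : ℝ) * τ) + 1/2 * (((j : ℝ) + 2) * τ) = ((j : ℝ) + 1) * τ := by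
      ring
    rw [hmid] at hkey
    push_cast
    linarith
  -- nonnegativity and monotonicity of the coefficients
  have hbpos : ∀ k, 1 ≤ k → k ≤ n → 0 ≤ b n k := by
    intro k hk1 hk2
    rw [hbk k hk1 hk2]
    have := hf_mono (n - k) (n - k + 1) (by omega)
    nlinarith
  have hbmono : ∀ k, 1 ≤ k → k + 1 ≤ n → b n k ≤ b n (k + 1) := by
    intro k hk1 hk2
    rw [hbk k hk1 (by omega), hbk (k + 1) (by omega) hk2]
    have e1 : n - k = (n - (k + 1)) + 1 := by omega
    rw [e1]
    have e3 : n - (k + 1) + 1 + 1 = n - (k + 1) + 2 := by omega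
    rw [e3]
    have := hf_conc (n - (k + 1))
    nlinarith
  -- g k := ‖φ n - φ k‖²
  set g : ℕ → ℝ := fun k => ‖φ n - φ k‖ ^ 2 with hg
  have hgnn : ∀ k, 0 ≤ g k := fun k => by positivity
  have hgn : g n = 0 := by simp [hg]
  have key := abel_sum_ge (fun k => b n k) g n hn1 hbpos hbmono hgnn
  rw [hgn] at key
  simp only [mul_zero, neg_zero] at key
  -- per-term identity
  have hterm : ∀ k ∈ Finset.Icc 1 n,
      b n k * (g (k - 1) - g k)
        = b n k * (2 * ⟪φ k - φ (k - 1), φ n⟫ - (‖φ k‖ ^ 2 - ‖φ (k - 1)‖ ^ 2)) := by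
    intro k hk
    congr 1
    simp only [hg]
    rw [norm_sub_sq_real (φ n) (φ (k - 1)), norm_sub_sq_real (φ n) (φ k),
      inner_sub_left]
    rw [real_inner_comm (φ k) (φ n), real_inner_comm (φ (k - 1)) (φ n)]
    ring
  rw [Finset.sum_congr rfl hterm] at key
  -- unfold the inner product on the left
  rw [ge_iff_le, real_inner_smul_left, sum_inner]
  simp only [real_inner_smul_left]
  set A : ℝ := ∑ k ∈ Finset.Icc 1 n, b n k * ⟪φ k - φ (k - 1), φ n⟫ with hA
  set D : ℝ := ∑ k ∈ Finset.Icc 1 n, b n k * (‖φ k‖ ^ 2 - ‖φ (k - 1)‖ ^ 2) with hD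
  have hkey : 0 ≤ 2 * A - D := by
    have : ∑ k ∈ Finset.Icc 1 n,
        b n k * (2 * ⟪φ k - φ (k - 1), φ n⟫ - (‖φ k‖ ^ 2 - ‖φ (k - 1)‖ ^ 2)) = 2 * A - D := by
      rw [hA, hD, Finset.mul_sum, ← Finset.sum_sub_distrib]
      apply Finset.sum_congr rfl
      intro k _
      ring
    linarith [this ▸ key]
  calc 1 / (2 * τ) * D ≤ 1 / (2 * τ) * (2 * A) := by
        apply mul_le_mul_of_nonneg_left (by linarith) (by positivity)
    _ = 1 / τ * A := by field_simp
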